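/- arXiv:1912.01475 — 2 statements merged into one kernel-verified Lean document; each statement's English description precedes it below -/
import Mathlib

section
/- Define the operators L̃₆,b u = b·u + x·u' and L̃₆,a⁺ u = a·u − (1−x)·u'. Then the composition L̃₆,a⁺ ∘ L̃₆,b applied to P̃_n^{(a-1,b)}(x) yields (n+a)(n+b) · P̃_n^{(a-1,b)}(x); i.e., P̃_n^{(a-1,b)} is an eigenfunction of this second-order differential operator with eigenvalue (n+a)(n+b). -/
open Finset Real

/-- Classical Jacobi polynomial `P_n^{(a,b)}(x)` with real parameters. -/
noncomputable def jacobiP (n : ℕ) (a b x : ℝ) : ℝ :=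
  (1 / n.factorial) * ∑ k ∈ Finset.range (n + 1),
    (n.choose k : ℝ) * (ascPochhammer ℝ k).eval (a + b + n + 1)
      * (ascPochhammer ℝ (n - k)).eval (a + k + 1) * ((x - 1) / 2) ^ k

/-- Shifted Jacobi polynomial `P̃_n^{(a,b)}(x) = P_n^{(a,b)}(2x-1)` on `(0,1)`. -/
noncomputable def shiftedJacobi (n : ℕ) (a b x : ℝ) : ℝ :=
  jacobiP n a b (2 * x - 1)

namespace SJaux

noncomputable def c (n : ℕ) (a b : ℝ) (k : ℕ) : ℝ :=
  (1 / (n.factorial : ℝ)) * (n.choose k : ℝ) * (ascPochhammer ℝ k).eval (a + b + n)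
    * (ascPochhammer ℝ (n - k)).eval (a + k)

lemma sj_eq (n : ℕ) (a b x : ℝ) :
    shiftedJacobi n (a - 1) b x = ∑ k ∈ Finset.range (n + 1), c n a b k * (x - 1) ^ k := by
  unfold shiftedJacobi jacobiP c
  rw [Finset.mul_sum]
  refine Finset.sum_congr rfl fun k _ => ?_
  have h1 : a - 1 + b + (n : ℝ) + 1 = a + b + n := by ring
  have h2 : a - 1 + (k : ℝ) + 1 = a + k := by ring
  have h3 : (2 * x - 1 - 1) / 2 = x - 1 := by ring
  rw [h1, h2, h3]
  ring

noncomputable def S1 (n : ℕ) (a b x : ℝ) : ℝ :=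
  ∑ k ∈ Finset.range (n + 1), c n a b k * ((k : ℝ) * (x - 1) ^ (k - 1))

noncomputable def S2 (n : ℕ) (a b x : ℝ) : ℝ :=
  ∑ k ∈ Finset.range (n + 1),
    c n a b k * ((k : ℝ) * (((k - 1 : ℕ) : ℝ) * (x - 1) ^ (k - 1 - 1)))

lemma hasDerivAt_S0 (n : ℕ) (a b x : ℝ) :
    HasDerivAt (fun t => ∑ k ∈ Finset.range (n + 1), c n a b k * (t - 1) ^ k)
      (S1 n a b x) x := by
  unfold S1
  apply HasDerivAt.fun_sum
  intro k _
  simpa using (((hasDerivAt_id x).sub_const 1).pow k).const_mul (c n a b k)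

lemma hasDerivAt_sj (n : ℕ) (a b x : ℝ) :
    HasDerivAt (fun t => shiftedJacobi n (a - 1) b t) (S1 n a b x) x := by
  rw [show (fun t => shiftedJacobi n (a - 1) b t)
      = (fun t => ∑ k ∈ Finset.range (n + 1), c n a b k * (t - 1) ^ k) from
    funext (sj_eq n a b)]
  exact hasDerivAt_S0 n a b x

lemma hasDerivAt_S1 (n : ℕ) (a b x : ℝ) :
    HasDerivAt (fun t => S1 n a b t) (S2 n a b x) x := by
  unfold S1 S2
  apply HasDerivAt.fun_sum
  intro k _
  simpa [mul_assoc] using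
    ((((hasDerivAt_id x).sub_const 1).pow (k - 1)).const_mul ((k : ℝ))).const_mul (c n a b k)

lemma poch_left_eval (m : ℕ) (y : ℝ) :
    (ascPochhammer ℝ (m + 1)).eval y = y * (ascPochhammer ℝ m).eval (y + 1) := by
  simp [ascPochhammer_succ_left, Polynomial.eval_comp]

lemma coeff_rec (n k : ℕ) (hk : k < n) (a b : ℝ) :
    (((n : ℝ) + a) * ((n : ℝ) + b) - (a + k) * (b + k)) * c n a b k
      = ((k : ℝ) + 1) * (a + k) * c n a b (k + 1) := by
  obtain ⟨m, rfl⟩ : ∃ m, n = k + (m + 1) := ⟨n - k - 1, by omega⟩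
  have e1 : k + (m + 1) - k = m + 1 := by omega
  have e2 : k + (m + 1) - (k + 1) = m := by omega
  have harg1 : a + b + ((k + (m + 1) : ℕ) : ℝ) = a + b + (k : ℝ) + (m : ℝ) + 1 := by
    push_cast; ring
  have harg2 : a + ((k + 1 : ℕ) : ℝ) = a + (k : ℝ) + 1 := by push_cast; ring
  unfold c
  rw [e1, e2, harg1, harg2, ascPochhammer_succ_eval k (a + b + (k : ℝ) + (m : ℝ) + 1),
    poch_left_eval m (a + (k : ℝ))]
  have hchoose : (((k + (m + 1)).choose (k + 1) : ℝ)) * ((k : ℝ) + 1)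
      = (((k + (m + 1)).choose k : ℝ)) * ((m : ℝ) + 1) := by
    have h := Nat.choose_succ_right_eq (k + (m + 1)) k
    have h2 : k + (m + 1) - k = m + 1 := by omega
    rw [h2] at h
    exact_mod_cast h
  push_cast
  linear_combination (-(1 / (((k + (m + 1)).factorial : ℕ) : ℝ))
      * (ascPochhammer ℝ k).eval (a + b + (k : ℝ) + (m : ℝ) + 1)
      * (ascPochhammer ℝ m).eval (a + (k : ℝ) + 1) * (a + (k : ℝ))
      * (a + b + (k : ℝ) + (m : ℝ) + 1 + (k : ℝ))) * hchoose

lemma term_id (a b x cc : ℝ) (k : ℕ) :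
    a * b * (cc * (x - 1) ^ k)
      + (a * x - (1 - x) * (b + 1)) * (cc * ((k : ℝ) * (x - 1) ^ (k - 1)))
      - (1 - x) * x * (cc * ((k : ℝ) * (((k - 1 : ℕ) : ℝ) * (x - 1) ^ (k - 1 - 1))))
    = (a + k) * (b + k) * (cc * (x - 1) ^ k)
      + (k : ℝ) * (a + (k : ℝ) - 1) * (cc * (x - 1) ^ (k - 1)) := by
  match k with
  | 0 => push_cast; ring
  | 1 => push_cast; ring
  | (m + 2) =>
    simp only [Nat.add_sub_cancel, show m + 2 - 1 = m + 1 from rfl,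
      show m + 1 - 1 = m from rfl]
    push_cast
    rw [pow_succ, pow_succ]
    ring

lemma shift_sum (n : ℕ) (a b x : ℝ) :
    ∑ k ∈ Finset.range (n + 1),
        ((((n : ℝ) + a) * ((n : ℝ) + b) - (a + k) * (b + k)) * (c n a b k * (x - 1) ^ k))
      = ∑ k ∈ Finset.range (n + 1),
        ((k : ℝ) * (a + (k : ℝ) - 1) * (c n a b k * (x - 1) ^ (k - 1))) := by
  rw [Finset.sum_range_succ, Finset.sum_range_succ']
  have hz : (((n : ℝ) + a) * ((n : ℝ) + b) - (a + n) * (b + n)) = 0 := by ring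
  rw [hz, zero_mul, add_zero]
  have hz0 : ((0 : ℕ) : ℝ) * (a + ((0 : ℕ) : ℝ) - 1) * (c n a b 0 * (x - 1) ^ (0 - 1)) = 0 := by
    simp
  rw [hz0, add_zero]
  refine Finset.sum_congr rfl fun k hk => ?_
  have hk' : k < n := Finset.mem_range.mp hk
  have := coeff_rec n k hk' a b
  have e : k + 1 - 1 = k := by omega
  rw [e]
  push_cast
  calc (((n : ℝ) + a) * ((n : ℝ) + b) - (a + k) * (b + k)) * (c n a b k * (x - 1) ^ k)
      = ((((n : ℝ) + a) * ((n : ℝ) + b) - (a + k) * (b + k)) * c n a b k) * (x - 1) ^ k := by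
        ring
    _ = (((k : ℝ) + 1) * (a + k) * c n a b (k + 1)) * (x - 1) ^ k := by rw [this]
    _ = ((k : ℝ) + 1) * (a + ((k : ℝ) + 1) - 1) * (c n a b (k + 1) * (x - 1) ^ k) := by
        ring

end SJaux

theorem shiftedJacobi_L6_eigen (n : ℕ) (a b : ℝ) (x : ℝ) :
    a * (b * shiftedJacobi n (a - 1) b x
          + x * deriv (fun t => shiftedJacobi n (a - 1) b t) x)
      - (1 - x) * deriv
          (fun t => b * shiftedJacobi n (a - 1) b t
            + t * deriv (fun s => shiftedJacobi n (a - 1) b s) t) x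
      = (n + a) * (n + b) * shiftedJacobi n (a - 1) b x := by
  classical
  open SJaux in
  have hd1 : ∀ y : ℝ, deriv (fun t => shiftedJacobi n (a - 1) b t) y = S1 n a b y :=
    fun y => (hasDerivAt_sj n a b y).deriv
  have hd2 : deriv (fun t => b * shiftedJacobi n (a - 1) b t
      + t * deriv (fun s => shiftedJacobi n (a - 1) b s) t) x
      = b * S1 n a b x + (1 * S1 n a b x + x * S2 n a b x) := by
    have hfe : (fun t => b * shiftedJacobi n (a - 1) b t
        + t * deriv (fun s => shiftedJacobi n (a - 1) b s) t)
        = fun t => b * shiftedJacobi n (a - 1) b t + t * S1 n a b t := by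
      funext t; rw [hd1 t]
    rw [hfe]
    exact (((hasDerivAt_sj n a b x).const_mul b).add
      ((hasDerivAt_id x).mul (hasDerivAt_S1 n a b x))).deriv
  rw [hd1 x, hd2, sj_eq]
  unfold SJaux.S1 SJaux.S2
  set cc := SJaux.c n a b with hcc
  calc a * (b * (∑ k ∈ Finset.range (n + 1), cc k * (x - 1) ^ k)
        + x * (∑ k ∈ Finset.range (n + 1), cc k * ((k : ℝ) * (x - 1) ^ (k - 1))))
      - (1 - x) * (b * (∑ k ∈ Finset.range (n + 1), cc k * ((k : ℝ) * (x - 1) ^ (k - 1)))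
        + (1 * (∑ k ∈ Finset.range (n + 1), cc k * ((k : ℝ) * (x - 1) ^ (k - 1)))
          + x * (∑ k ∈ Finset.range (n + 1),
              cc k * ((k : ℝ) * (((k - 1 : ℕ) : ℝ) * (x - 1) ^ (k - 1 - 1))))))
      = a * b * (∑ k ∈ Finset.range (n + 1), cc k * (x - 1) ^ k)
        + (a * x - (1 - x) * (b + 1))
          * (∑ k ∈ Finset.range (n + 1), cc k * ((k : ℝ) * (x - 1) ^ (k - 1)))
        - (1 - x) * x * (∑ k ∈ Finset.range (n + 1),
            cc k * ((k : ℝ) * (((k - 1 : ℕ) : ℝ) * (x - 1) ^ (k - 1 - 1)))) := by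
        ring
    _ = ∑ k ∈ Finset.range (n + 1),
          (a * b * (cc k * (x - 1) ^ k)
            + (a * x - (1 - x) * (b + 1)) * (cc k * ((k : ℝ) * (x - 1) ^ (k - 1)))
            - (1 - x) * x * (cc k * ((k : ℝ) * (((k - 1 : ℕ) : ℝ) * (x - 1) ^ (k - 1 - 1))))) := by
        rw [Finset.sum_sub_distrib, Finset.sum_add_distrib, ← Finset.mul_sum,
          ← Finset.mul_sum, ← Finset.mul_sum]
    _ = ∑ k ∈ Finset.range (n + 1),
          ((a + k) * (b + k) * (cc k * (x - 1) ^ k)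
            + (k : ℝ) * (a + (k : ℝ) - 1) * (cc k * (x - 1) ^ (k - 1))) :=
        Finset.sum_congr rfl fun k _ => SJaux.term_id a b x (cc k) k
    _ = ∑ k ∈ Finset.range (n + 1),
          (((n : ℝ) + a) * ((n : ℝ) + b) * (cc k * (x - 1) ^ k)) := by
        rw [Finset.sum_add_distrib, ← SJaux.shift_sum n a b x, ← hcc,
          ← Finset.sum_add_distrib]
        exact Finset.sum_congr rfl fun k _ => by ring
    _ = ((n : ℝ) + a) * ((n : ℝ) + b) * ∑ k ∈ Finset.range (n + 1), cc k * (x - 1) ^ k := by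
        rw [← Finset.mul_sum]
end

section
/- The three-variable Koornwinder-type polynomial u = P_{n₁,n₂,n₃}^{(α,β,γ,δ,a,b)}(x,y,z) satisfies the second-order partial differential equation z(1−x−y−z)·u_{zz} + [(γ+1)(1−x−y−z) − (δ+1)z]·u_z + n₃(n₃+γ+δ+1)·u = 0. -/
open Finset Real

/-- Six-parameter Koornwinder-type polynomial in three variables. -/
noncomputable def koornwinder3 (n1 n2 n3 : ℕ) (α β γ δ a b : ℝ) (x y z : ℝ) : ℝ :=
  jacobiP n1 (β + γ + δ + a + b + 2 * n2 + 2 * n3 + 2) α (2 * x - 1)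
    * (1 - x) ^ n2
    * jacobiP n2 (γ + δ + 2 * n3 + b + 1) β (2 * y / (1 - x) - 1)
    * (1 - x - y) ^ n3
    * jacobiP n3 δ γ (2 * z / (1 - x - y) - 1)



noncomputable def jc (n : ℕ) (a b : ℝ) (k : ℕ) : ℝ :=
  (1 / n.factorial) * (n.choose k : ℝ) * (ascPochhammer ℝ k).eval (a + b + n + 1)
      * (ascPochhammer ℝ (n - k)).eval (a + k + 1)

lemma ascPochhammer_succ_eval_left (n : ℕ) (y : ℝ) :
    (ascPochhammer ℝ (n + 1)).eval y = y * (ascPochhammer ℝ n).eval (y + 1) := by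
  rw [ascPochhammer_succ_left, Polynomial.eval_mul, Polynomial.eval_X, Polynomial.eval_comp,
    Polynomial.eval_add, Polynomial.eval_X, Polynomial.eval_one]

lemma jc_rec (n : ℕ) (a b : ℝ) (k : ℕ) (hk : k < n) :
    ((k:ℝ)+1) * ((k:ℝ)+a+1) * jc n a b (k+1)
      = ((n:ℝ)-(k:ℝ)) * ((n:ℝ)+(k:ℝ)+a+b+1) * jc n a b k := by
  unfold jc
  have h1 : n - k = (n - (k+1)) + 1 := by omega
  have h2 : (ascPochhammer ℝ (k+1)).eval (a+b+n+1)
      = (ascPochhammer ℝ k).eval (a+b+n+1) * (a+b+n+1+k) := ascPochhammer_succ_eval k _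
  have h3 : (ascPochhammer ℝ (n-k)).eval (a+k+1)
      = (a+k+1) * (ascPochhammer ℝ (n-(k+1))).eval (a+k+1+1) := by
    rw [h1, ascPochhammer_succ_eval_left]
  have h4 : ((n.choose (k+1)) : ℝ) * ((k:ℝ)+1) = (n.choose k : ℝ) * ((n:ℝ)-(k:ℝ)) := by
    have := Nat.choose_succ_right_eq n k
    have hc : ((n.choose (k+1) * (k+1) : ℕ) : ℝ) = ((n.choose k * (n - k) : ℕ) : ℝ) := by
      exact_mod_cast congrArg (Nat.cast : ℕ → ℝ) this
    push_cast [Nat.cast_sub hk.le] at hc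
    linarith [hc]
  rw [h2, h3]
  have h5 : (a:ℝ) + (↑(k+1):ℝ) + 1 = a + k + 1 + 1 := by push_cast; ring
  rw [h5]
  linear_combination (1/(n.factorial:ℝ)) * ((k:ℝ)+a+1) * (a+b+(n:ℝ)+1+(k:ℝ))
    * (ascPochhammer ℝ k).eval (a+b+(n:ℝ)+1)
    * (ascPochhammer ℝ (n-(k+1))).eval (a+(k:ℝ)+1+1) * h4

noncomputable def Qs (n : ℕ) (a b t : ℝ) : ℝ := ∑ k ∈ range (n+1), jc n a b k * t^k
noncomputable def Q1 (n : ℕ) (a b t : ℝ) : ℝ :=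
  ∑ k ∈ range (n+1), (jc n a b k * k) * t^(k-1)
noncomputable def Q2 (n : ℕ) (a b t : ℝ) : ℝ :=
  ∑ k ∈ range (n+1), ((jc n a b k * k) * ((k-1 : ℕ) : ℝ)) * t^(k-2)

lemma hasDeriv_Qs (n : ℕ) (a b t : ℝ) : HasDerivAt (fun t => Qs n a b t) (Q1 n a b t) t := by
  unfold Qs Q1
  apply HasDerivAt.fun_sum
  intro k _
  simpa [mul_assoc, mul_comm, mul_left_comm] using (hasDerivAt_pow k t).const_mul (jc n a b k)

lemma hasDeriv_Q1 (n : ℕ) (a b t : ℝ) : HasDerivAt (fun t => Q1 n a b t) (Q2 n a b t) t := by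
  unfold Q1 Q2
  apply HasDerivAt.fun_sum
  intro k _
  have := (hasDerivAt_pow (k-1) t).const_mul (jc n a b k * k)
  have he : k - 1 - 1 = k - 2 := by omega
  rw [he] at this
  simpa [mul_assoc, mul_comm, mul_left_comm] using this

lemma jacobi_ode (n : ℕ) (a b t : ℝ) :
    -(t*(t+1)) * Q2 n a b t - ((a+1)+(a+b+2)*t) * Q1 n a b t
      + (n:ℝ)*((n:ℝ)+a+b+1) * Qs n a b t = 0 := by
  unfold Qs Q1 Q2
  rw [Finset.mul_sum, Finset.mul_sum, Finset.mul_sum, ← Finset.sum_sub_distrib,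
    ← Finset.sum_add_distrib]
  have key : ∀ k ∈ range (n+1),
      -(t*(t+1)) * (((jc n a b k * k) * ((k-1 : ℕ) : ℝ)) * t^(k-2))
        - ((a+1)+(a+b+2)*t) * ((jc n a b k * k) * t^(k-1))
        + (n:ℝ)*((n:ℝ)+a+b+1) * (jc n a b k * t^k)
      = ((n:ℝ)-(k:ℝ))*((n:ℝ)+(k:ℝ)+a+b+1) * jc n a b k * t^k
        - ((k:ℝ)*((k:ℝ)+a)*jc n a b k) * t^(k-1) := by
    intro k _
    match k with
    | 0 => push_cast; ring
    | 1 => push_cast; ring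
    | (m+2) =>
      have h1 : m + 2 - 1 = m + 1 := rfl
      have h2 : m + 2 - 2 = m := rfl
      rw [h1, h2]
      push_cast
      ring
  rw [Finset.sum_congr rfl key, Finset.sum_sub_distrib]
  have hL : ∑ k ∈ range (n+1), ((n:ℝ)-(k:ℝ))*((n:ℝ)+(k:ℝ)+a+b+1) * jc n a b k * t^k
      = ∑ k ∈ range n, ((n:ℝ)-(k:ℝ))*((n:ℝ)+(k:ℝ)+a+b+1) * jc n a b k * t^k := by
    rw [Finset.sum_range_succ]; simp
  have hR : ∑ k ∈ range (n+1), ((k:ℝ)*((k:ℝ)+a)*jc n a b k) * t^(k-1)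
      = ∑ k ∈ range n, (((k:ℝ)+1)*(((k:ℝ)+1)+a)*jc n a b (k+1)) * t^k := by
    rw [Finset.sum_range_succ']
    push_cast
    simp
  rw [hL, hR, ← Finset.sum_sub_distrib]
  apply Finset.sum_eq_zero
  intro k hk
  have := jc_rec n a b k (Finset.mem_range.mp hk)
  linear_combination (-(t^k)) * this

lemma jacobiP_eq (n : ℕ) (a b x : ℝ) : jacobiP n a b x = Qs n a b ((x-1)/2) := by
  unfold jacobiP Qs jc
  rw [Finset.mul_sum]
  exact Finset.sum_congr rfl fun k _ => by ring

theorem koornwinder3_pde_z (n1 n2 n3 : ℕ) (α β γ δ a b : ℝ) (x y z : ℝ) :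
    z * (1 - x - y - z)
          * deriv (deriv (fun t => koornwinder3 n1 n2 n3 α β γ δ a b x y t)) z
        + ((γ + 1) * (1 - x - y - z) - (δ + 1) * z)
            * deriv (fun t => koornwinder3 n1 n2 n3 α β γ δ a b x y t) z
        + n3 * (n3 + γ + δ + 1) * koornwinder3 n1 n2 n3 α β γ δ a b x y z = 0 := by
  by_cases hs : (1 : ℝ) - x - y = 0
  · have hconst : (fun t => koornwinder3 n1 n2 n3 α β γ δ a b x y t)
        = fun _ => koornwinder3 n1 n2 n3 α β γ δ a b x y 0 := by
      funext t
      unfold koornwinder3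
      rw [hs, div_zero, div_zero]
    rw [hconst, deriv_const', deriv_const']
    simp only [deriv_const', mul_zero, zero_add, add_zero]
    rcases Nat.eq_zero_or_pos n3 with h0 | hpos
    · subst h0; push_cast; ring
    · unfold koornwinder3
      rw [hs, zero_pow (by omega : n3 ≠ 0)]
      ring
  · set K : ℝ := jacobiP n1 (β + γ + δ + a + b + 2 * n2 + 2 * n3 + 2) α (2 * x - 1)
      * (1 - x) ^ n2 * jacobiP n2 (γ + δ + 2 * n3 + b + 1) β (2 * y / (1 - x) - 1)
      * (1 - x - y) ^ n3 with hK
    have hu : (fun t => koornwinder3 n1 n2 n3 α β γ δ a b x y t)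
        = fun t => K * Qs n3 δ γ (t / (1 - x - y) - 1) := by
      funext t
      unfold koornwinder3
      rw [show jacobiP n3 δ γ (2 * t / (1 - x - y) - 1) = Qs n3 δ γ (t / (1 - x - y) - 1) from by
        rw [jacobiP_eq, show (2 * t / (1 - x - y) - 1 - 1) / 2 = t / (1 - x - y) - 1 from by ring],
        hK]
    have hi : ∀ w : ℝ, HasDerivAt (fun t : ℝ => t / (1 - x - y) - 1) ((1 - x - y)⁻¹) w := by
      intro w
      simpa [one_div] using ((hasDerivAt_id w).div_const (1 - x - y)).sub_const 1
    have hd1 : ∀ w : ℝ, HasDerivAt (fun t => K * Qs n3 δ γ (t / (1 - x - y) - 1))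
        (K * (Q1 n3 δ γ (w / (1 - x - y) - 1) * (1 - x - y)⁻¹)) w := by
      intro w
      exact ((hasDeriv_Qs n3 δ γ (w / (1 - x - y) - 1)).comp w (hi w)).const_mul K
    have hderiv1 : deriv (fun t => koornwinder3 n1 n2 n3 α β γ δ a b x y t)
        = fun w => K * (Q1 n3 δ γ (w / (1 - x - y) - 1) * (1 - x - y)⁻¹) := by
      rw [hu]; funext w; exact (hd1 w).deriv
    have hd2 : HasDerivAt (fun w => K * (Q1 n3 δ γ (w / (1 - x - y) - 1) * (1 - x - y)⁻¹))
        (K * ((Q2 n3 δ γ (z / (1 - x - y) - 1) * (1 - x - y)⁻¹) * (1 - x - y)⁻¹)) z :=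
      (((hasDeriv_Q1 n3 δ γ (z / (1 - x - y) - 1)).comp z (hi z)).mul_const
        (1 - x - y)⁻¹).const_mul K
    have hz : koornwinder3 n1 n2 n3 α β γ δ a b x y z
        = K * Qs n3 δ γ (z / (1 - x - y) - 1) := congrFun hu z
    simp only [hderiv1]
    rw [hd2.deriv, hz]
    have ode := jacobi_ode n3 δ γ (z / (1 - x - y) - 1)
    set q0 := Qs n3 δ γ (z / (1 - x - y) - 1) with hq0
    set q1 := Q1 n3 δ γ (z / (1 - x - y) - 1) with hq1
    set q2 := Q2 n3 δ γ (z / (1 - x - y) - 1) with hq2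
    clear_value q0 q1 q2
    field_simp at ode ⊢
    linear_combination K * ode
end
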